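/- Let (x_k) be a sequence in ℝⁿ, X* a closed set, c₂ > 0, ρ ∈ (0,1), and suppose for all k ≥ K: ‖x_{k+1} - x_k‖ ≤ c₂·dist(x_k, X*) and dist(x_{k+1}, X*) ≤ ρ·dist(x_k, X*). Then (x_k) is a Cauchy sequence, and its limit x̄ satisfies ‖x_k - x̄‖ ≤ (c₂/(1-ρ))·dist(x_k, X*) for all k ≥ K. -/

import Mathlib

open Filter

/-- if for k ≥ K, ‖x_{k+1} - x_k‖ ≤ c₂·dist(x_k, X*) and
dist(x_{k+1}, X*) ≤ ρ·dist(x_k, X*) with ρ ∈ (0,1), then (x_k) is Cauchy and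
its limit x̄ satisfies ‖x_k - x̄‖ ≤ (c₂/(1-ρ))·dist(x_k, X*) for all k ≥ K. -/
theorem stmt_13 {n : ℕ} (x : ℕ → EuclideanSpace ℝ (Fin n))
    (Xs : Set (EuclideanSpace ℝ (Fin n))) (hXs : IsClosed Xs)
    (c₂ ρ : ℝ) (hc₂ : 0 < c₂) (hρ : ρ ∈ Set.Ioo (0 : ℝ) 1) (K : ℕ)
    (hstep : ∀ k ≥ K, ‖x (k + 1) - x k‖ ≤ c₂ * Metric.infDist (x k) Xs)
    (hdec : ∀ k ≥ K, Metric.infDist (x (k + 1)) Xs ≤ ρ * Metric.infDist (x k) Xs) :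
    CauchySeq x ∧
    ∀ xbar, Tendsto x atTop (nhds xbar) →
      ∀ k ≥ K, ‖x k - xbar‖ ≤ c₂ / (1 - ρ) * Metric.infDist (x k) Xs := by
  obtain ⟨hρ0, hρ1⟩ := hρ
  -- geometric decay of infDist from any k ≥ K
  have hgeo : ∀ k ≥ K, ∀ j : ℕ,
      Metric.infDist (x (k + j)) Xs ≤ ρ ^ j * Metric.infDist (x k) Xs := by
    intro k hk j
    induction j with
    | zero => simp
    | succ j ih =>
      calc Metric.infDist (x (k + (j + 1))) Xs
          ≤ ρ * Metric.infDist (x (k + j)) Xs := hdec _ (le_trans hk (Nat.le_add_right _ _))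
        _ ≤ ρ * (ρ ^ j * Metric.infDist (x k) Xs) := by
            exact mul_le_mul_of_nonneg_left ih hρ0.le
        _ = ρ ^ (j + 1) * Metric.infDist (x k) Xs := by ring
  have hd : ∀ k ≥ K, ∀ j : ℕ,
      dist (x (k + j)) (x (k + (j + 1))) ≤ (c₂ * Metric.infDist (x k) Xs) * ρ ^ j := by
    intro k hk j
    rw [dist_comm, dist_eq_norm]
    calc ‖x (k + (j + 1)) - x (k + j)‖
        ≤ c₂ * Metric.infDist (x (k + j)) Xs := by
          have := hstep (k + j) (le_trans hk (Nat.le_add_right _ _))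
          simpa [Nat.add_assoc] using this
      _ ≤ c₂ * (ρ ^ j * Metric.infDist (x k) Xs) :=
          mul_le_mul_of_nonneg_left (hgeo k hk j) hc₂.le
      _ = (c₂ * Metric.infDist (x k) Xs) * ρ ^ j := by ring
  have hcauchy : CauchySeq x := by
    rw [← cauchySeq_shift K]
    apply cauchySeq_of_le_geometric ρ (c₂ * Metric.infDist (x K) Xs) hρ1
    intro j
    simpa [Nat.add_comm] using hd K le_rfl j
  refine ⟨hcauchy, ?_⟩
  intro xbar hx k hk
  have htend : Tendsto (fun j => x (k + j)) atTop (nhds xbar) := by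
    have := hx.comp (tendsto_add_atTop_nat k)
    simpa [Function.comp_def, Nat.add_comm] using this
  have := dist_le_of_le_geometric_of_tendsto₀ ρ (c₂ * Metric.infDist (x k) Xs) hρ1 (hd k hk) htend
  rw [dist_eq_norm] at this
  simpa [add_zero, mul_div_assoc, mul_comm, mul_left_comm, div_mul_eq_mul_div] using this
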